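/- Let g : [0,∞) → (0,∞) be differentiable with g(0) = 1, and suppose there exist differentiable functions ξ, δ : [0,∞) → (0,∞) with δ(0) = 1 such that g(t+a) = ξ(a)·g(t/δ(a)) for all t, a ≥ 0. Then with α = g'(0) and β = δ'(0): if β > 0 then g(t) = (1+βt)^{α/β} for all t ≥ 0. -/

import Mathlib

open Set Real

/-- Elliptical characterization: if a positive differentiable generator `g` with `g(0)=1`
satisfies `g(t+a) = ξ(a) g(t/δ(a))` on `[0,∞)` with `δ(0)=1`, and `β = δ'(0) > 0`, then
`g(t) = (1+βt)^(α/β)` where `α = g'(0)` (Pearson type VII / Student-t generator). -/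
theorem elliptical_generator_characterization (g ξ δ : ℝ → ℝ)
    (hgpos : ∀ t, 0 ≤ t → 0 < g t) (hξpos : ∀ t, 0 ≤ t → 0 < ξ t)
    (hδpos : ∀ t, 0 ≤ t → 0 < δ t)
    (hgdiff : DifferentiableOn ℝ g (Ici 0)) (hξdiff : DifferentiableOn ℝ ξ (Ici 0))
    (hδdiff : DifferentiableOn ℝ δ (Ici 0))
    (hg0 : g 0 = 1) (hδ0 : δ 0 = 1)
    (hfe : ∀ t a, 0 ≤ t → 0 ≤ a → g (t + a) = ξ a * g (t / δ a))
    (hβ : 0 < derivWithin δ (Ici 0) 0) :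
    ∀ t, 0 ≤ t →
      g t = (1 + derivWithin δ (Ici 0) 0 * t) ^
        (derivWithin g (Ici 0) 0 / derivWithin δ (Ici 0) 0) := by
  set β := derivWithin δ (Ici 0) 0 with hβdef
  set α := derivWithin g (Ici 0) 0 with hαdef
  set gd : ℝ → ℝ := fun t => derivWithin g (Ici 0) t with hgddef
  have h0mem : (0:ℝ) ∈ Ici (0:ℝ) := self_mem_Ici
  have hud : UniqueDiffOn ℝ (Ici (0:ℝ)) := uniqueDiffOn_Ici 0
  -- ξ = g on [0, ∞)
  have hξg : ∀ a, 0 ≤ a → ξ a = g a := by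
    intro a ha
    have := hfe 0 a le_rfl ha
    simp [hg0, zero_div] at this
    linarith
  -- key ODE: gd t * (1 + β * t) = α * g t on [0,∞)
  have hODE : ∀ t, 0 ≤ t → gd t * (1 + β * t) = α * g t := by
    intro t ht
    have hxpos : (0:ℝ) < 1 + β * t := by positivity
    -- derivative of a ↦ g (t + a) at 0 within Ici 0
    have hgt : HasDerivWithinAt g (gd t) (Ici 0) t :=
      (hgdiff t ht).hasDerivWithinAt
    have hinner : HasDerivWithinAt (fun a : ℝ => t + a) 1 (Ici 0) 0 := by
      simpa using ((hasDerivWithinAt_id (0:ℝ) (Ici 0)).const_add t)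
    have hmaps : MapsTo (fun a : ℝ => t + a) (Ici 0) (Ici 0) := by
      intro a ha; exact add_nonneg ht ha
    have hF : HasDerivWithinAt (fun a : ℝ => g (t + a)) (gd t) (Ici 0) 0 := by
      have := HasDerivWithinAt.comp (h₂ := g) (h := fun a : ℝ => t + a) 0
        (by simpa using hgt) hinner hmaps
      rw [mul_one] at this
      exact this
    -- derivative of a ↦ g a * g (t / δ a) at 0 within Ici 0
    have hδ0' : HasDerivWithinAt δ β (Ici 0) 0 := (hδdiff 0 h0mem).hasDerivWithinAt
    have hδne : δ 0 ≠ 0 := by rw [hδ0]; norm_num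
    have hv : HasDerivWithinAt (fun a : ℝ => t / δ a)
        ((0 * δ 0 - t * β) / (δ 0) ^ 2) (Ici 0) 0 :=
      (hasDerivWithinAt_const (0:ℝ) (Ici 0) t).div hδ0' hδne
    have hveq : (0 * δ 0 - t * β) / (δ 0) ^ 2 = -(t * β) := by
      rw [hδ0]; ring
    rw [hveq] at hv
    have hv0 : t / δ 0 = t := by rw [hδ0, div_one]
    have hgt' : HasDerivWithinAt g (gd t) (Ici 0) (t / δ 0) := by rw [hv0]; exact hgt
    have hvmaps : MapsTo (fun a : ℝ => t / δ a) (Ici 0) (Ici 0) := by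
      intro a ha; exact div_nonneg ht (hδpos a ha).le
    have hw : HasDerivWithinAt (fun a : ℝ => g (t / δ a)) (gd t * -(t * β)) (Ici 0) 0 := by
      have := HasDerivWithinAt.comp (h₂ := g) (h := fun a : ℝ => t / δ a) 0
        hgt' hv hvmaps
      exact this
    have hga : HasDerivWithinAt g α (Ici 0) 0 := (hgdiff 0 h0mem).hasDerivWithinAt
    have hG : HasDerivWithinAt (fun a : ℝ => g a * g (t / δ a))
        (α * g (t / δ 0) + g 0 * (gd t * -(t * β))) (Ici 0) 0 := hga.mul hw
    -- the two functions agree on Ici 0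
    have hcongr : HasDerivWithinAt (fun a : ℝ => g (t + a))
        (α * g (t / δ 0) + g 0 * (gd t * -(t * β))) (Ici 0) 0 := by
      apply hG.congr
      · intro a ha
        rw [hfe t a ht ha, hξg a ha]
      · rw [hfe t 0 ht le_rfl, hξg 0 le_rfl]
    have h1 := hF.derivWithin (hud 0 h0mem)
    have h2 := hcongr.derivWithin (hud 0 h0mem)
    have heq : gd t = α * g (t / δ 0) + g 0 * (gd t * -(t * β)) := h1.symm.trans h2
    rw [hv0, hg0] at heq
    nlinarith [heq]
  -- the function h t = g t * (1 + β t) ^ (-(α/β)) is constant on [0, ∞)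
  set c : ℝ := α / β with hcdef
  set h : ℝ → ℝ := fun t => g t * (1 + β * t) ^ (-c) with hhdef
  have hβne : β ≠ 0 := ne_of_gt hβ
  have hderiv0 : ∀ t, 0 ≤ t → HasDerivWithinAt h 0 (Ici 0) t := by
    intro t ht
    have hxpos : (0:ℝ) < 1 + β * t := by positivity
    have hlin : HasDerivWithinAt (fun s : ℝ => 1 + β * s) β (Ici 0) t := by
      simpa using (((hasDerivWithinAt_id t (Ici 0)).const_mul β).const_add 1)
    have hrpow : HasDerivWithinAt (fun s : ℝ => (1 + β * s) ^ (-c))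
        (β * (-c) * (1 + β * t) ^ (-c - 1)) (Ici 0) t :=
      hlin.rpow_const (Or.inl hxpos.ne')
    have hgt : HasDerivWithinAt g (gd t) (Ici 0) t := (hgdiff t ht).hasDerivWithinAt
    have hmul : HasDerivWithinAt h
        (gd t * (1 + β * t) ^ (-c) + g t * (β * (-c) * (1 + β * t) ^ (-c - 1)))
        (Ici 0) t := hgt.mul hrpow
    have hkey : gd t * (1 + β * t) ^ (-c) + g t * (β * (-c) * (1 + β * t) ^ (-c - 1)) = 0 := by
      have hsplit : (1 + β * t) ^ (-c) = (1 + β * t) ^ (-c - 1) * (1 + β * t) := by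
        rw [← Real.rpow_add_one hxpos.ne' (-c - 1)]; ring_nf
      have hβc : β * c = α := by rw [hcdef]; field_simp
      rw [hsplit]
      have hode := hODE t ht
      linear_combination (1 + β * t) ^ (-c - 1) * hode - g t * (1 + β * t) ^ (-c - 1) * hβc
    rwa [hkey] at hmul
  have hcont : ContinuousOn h (Ici 0) := by
    apply ContinuousOn.mul (hgdiff.continuousOn)
    apply ContinuousOn.rpow_const
    · exact (continuousOn_const.add (continuousOn_const.mul continuousOn_id))
    · intro x hx
      left
      have : (0:ℝ) < 1 + β * x := by have := hx; simp at this; positivity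
      exact this.ne'
  intro t ht
  have hxpos : (0:ℝ) < 1 + β * t := by positivity
  have hconst : h t = h 0 := by
    have := constant_of_has_deriv_right_zero (f := h) (a := 0) (b := t)
      (hcont.mono Icc_subset_Ici_self)
      (fun x hx => (hderiv0 x hx.1).mono (Ici_subset_Ici.mpr hx.1))
    exact this t ⟨ht, le_rfl⟩
  have hh0 : h 0 = 1 := by
    simp [hhdef, hg0]
  rw [hh0] at hconst
  -- from g t * (1+βt)^(-c) = 1 conclude
  have hpow : (1 + β * t) ^ (-c) = ((1 + β * t) ^ c)⁻¹ := Real.rpow_neg hxpos.le c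
  rw [hhdef] at hconst
  simp only at hconst
  rw [hpow] at hconst
  have hcpos : (0:ℝ) < (1 + β * t) ^ c := Real.rpow_pos_of_pos hxpos c
  field_simp at hconst
  exact hconst
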